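/- Let X₁, X₂, Z and ε be mutually independent random variables on a probability space, where X₁ is exponentially distributed with mean λ₁ > 0, X₂ is exponentially distributed with mean λ₂ > 0, Z is nonnegative, and ε takes the values 0 and 1 each with probability 1/2. Let ρ, η, u > 0 and 0 < a₁ ≤ 1, and set A(ε) = 1 − ε(1 − a₁), B(ε) = 1 − (1 − ε)(1 − a₁). Then ℙ( A(ε)·ρ·X₂ < u·(B(ε)·ρ·X₁ + η·ρ·Z + 1) ) = 1 − (1/2)·[ ( λ₂/(a₁·u·λ₁ + λ₂) )·exp(−u/(λ₂·ρ))·𝔼[exp(−η·u·Z/λ₂)] + ( a₁·λ₂/(u·λ₁ + a₁·λ₂) )·exp(−u/(a₁·λ₂·ρ))·𝔼[exp(−η·u·Z/(a₁·λ₂))] ]. -/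

import Mathlib

set_option maxHeartbeats 1000000

open MeasureTheory ProbabilityTheory Real

open Filter Set

noncomputable def expDens (lam : ℝ) : ℝ → ENNReal :=
  fun x => ENNReal.ofReal (if 0 ≤ x then (1 / lam) * Real.exp (-x / lam) else 0)


lemma expInt {c : ℝ} (hc : 0 < c) (s : ℝ) :
    ∫ x in Ioi s, Real.exp (-(c * x)) = Real.exp (-(c * s)) / c := by
  have hderiv : ∀ x ∈ Ioi s, HasDerivAt (fun x => -Real.exp (-(c * x)) / c)
      (Real.exp (-(c * x))) x := by
    intro x _
    have := (((hasDerivAt_id x).const_mul c).neg.exp).neg.div_const c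
    simpa [hc.ne', mul_comm] using this
  have hint : IntegrableOn (fun x => Real.exp (-(c * x))) (Ioi s) := by
    simpa [neg_mul] using exp_neg_integrableOn_Ioi s hc
  have htend : Tendsto (fun x => -Real.exp (-(c * x)) / c) atTop (nhds (-0 / c)) := by
    refine Tendsto.div_const (Tendsto.neg ?_) _
    exact tendsto_exp_atBot.comp (by simpa [neg_mul] using
      (tendsto_id (α := ℝ)).const_mul_atTop_of_neg (neg_neg_iff_pos.2 hc))
  have := integral_Ioi_of_hasDerivAt_of_tendsto (f := fun x => -Real.exp (-(c * x)) / c)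
    (f' := fun x => Real.exp (-(c * x))) ((Continuous.continuousWithinAt (by continuity))) hderiv hint htend
  rw [this]; ring


lemma expDens_meas (lam : ℝ) : Measurable (expDens lam) := by
  apply Measurable.ennreal_ofReal
  exact Measurable.ite (measurableSet_le measurable_const measurable_id) (by fun_prop)
    measurable_const

lemma int_exp_Ici {c : ℝ} (hc : 0 < c) (s : ℝ) :
    IntegrableOn (fun x => Real.exp (-(c * x))) (Ici s) := by
  rw [integrableOn_Ici_iff_integrableOn_Ioi]
  simpa [neg_mul] using exp_neg_integrableOn_Ioi s hc

lemma expTail {lam : ℝ} (hlam : 0 < lam) {s : ℝ} (hs : 0 ≤ s) :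
    MeasureTheory.volume.withDensity (expDens lam) (Ici s)
      = ENNReal.ofReal (Real.exp (-(s / lam))) := by
  rw [withDensity_apply _ measurableSet_Ici]
  have e1 : ∫⁻ x in Ici s, expDens lam x =
      ∫⁻ x in Ici s, ENNReal.ofReal ((1/lam) * Real.exp (-((1/lam) * x))) := by
    refine setLIntegral_congr_fun measurableSet_Ici ?_
    intro x hx
    have h0 : (0:ℝ) ≤ x := le_trans hs hx
    simp only [expDens, if_pos h0]
    congr 1; ring_nf
  have hint : IntegrableOn (fun x => (1/lam) * Real.exp (-((1/lam) * x))) (Ici s) :=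
    (int_exp_Ici (by positivity) s).const_mul _
  have e2 := ofReal_integral_eq_lintegral_ofReal hint
    (Filter.Eventually.of_forall (fun x => by positivity))
  rw [e1, ← e2]
  congr 1
  rw [integral_Ici_eq_integral_Ioi, integral_const_mul, expInt (by positivity) s]
  field_simp


lemma expMoment {lam α : ℝ} (hlam : 0 < lam) (hα : 0 ≤ α) :
    ∫⁻ x, ENNReal.ofReal (Real.exp (-(α * x)))
        ∂(MeasureTheory.volume.withDensity (expDens lam))
      = ENNReal.ofReal (1 / (α * lam + 1)) := by
  set c : ℝ := α + 1/lam with hc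
  have hcpos : 0 < c := by positivity
  rw [lintegral_withDensity_eq_lintegral_mul _ (expDens_meas lam) (by fun_prop)]
  have e1 : ∀ x : ℝ, (expDens lam * fun x => ENNReal.ofReal (Real.exp (-(α * x)))) x
      = ENNReal.ofReal (Set.indicator (Ici 0) (fun x => (1/lam) * Real.exp (-(c * x))) x) := by
    intro x
    simp only [Pi.mul_apply, expDens, Set.indicator_apply, mem_Ici]
    by_cases h0 : (0:ℝ) ≤ x
    · rw [if_pos h0, if_pos h0, ← ENNReal.ofReal_mul (by positivity)]
      congr 1
      rw [mul_assoc, ← Real.exp_add]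
      congr 2
      rw [hc]
      field_simp
      ring
    · rw [if_neg h0, if_neg h0]
      simp
  simp only [e1]
  have hint : Integrable (Set.indicator (Ici 0) (fun x => (1/lam) * Real.exp (-(c * x)))) := by
    rw [integrable_indicator_iff measurableSet_Ici]
    exact (int_exp_Ici hcpos 0).const_mul _
  rw [← ofReal_integral_eq_lintegral_ofReal hint (Filter.Eventually.of_forall (fun x => by
    by_cases h0 : x ∈ Ici (0:ℝ) <;> simp [Set.indicator_apply, h0] <;> positivity))]
  congr 1
  rw [integral_indicator measurableSet_Ici, integral_Ici_eq_integral_Ioi, integral_const_mul,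
    expInt hcpos 0]
  rw [mul_zero, neg_zero, Real.exp_zero, hc]
  rw [div_mul_div_comm, one_mul]
  congr 1
  field_simp


lemma probG {Ω : Type*} [MeasurableSpace Ω] (P : Measure Ω) [IsProbabilityMeasure P]
    {lam₁ lam₂ ρ η u b c : ℝ} (hlam₁ : 0 < lam₁) (hlam₂ : 0 < lam₂)
    (hρ : 0 < ρ) (hη : 0 < η) (hu : 0 < u) (hb : 0 < b) (hc : 0 < c)
    (X₁ X₂ Z : Ω → ℝ) (hX₁m : Measurable X₁) (hX₂m : Measurable X₂)
    (hX₁ : P.map X₁ = MeasureTheory.volume.withDensity (expDens lam₁))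
    (hX₂ : P.map X₂ = MeasureTheory.volume.withDensity (expDens lam₂))
    (hZmeas : Measurable Z) (hZnonneg : ∀ ω, 0 ≤ Z ω)
    (hI1 : IndepFun (fun ω => (X₁ ω, Z ω)) X₂ P) (hI2 : IndepFun X₁ Z P) :
    P {ω | u * (c * ρ * X₁ ω + η * ρ * Z ω + 1) ≤ b * ρ * X₂ ω}
      = ENNReal.ofReal ((b * lam₂ / (u * c * lam₁ + b * lam₂)) *
          Real.exp (-(u / (b * ρ * lam₂))) *
          ∫ ω, Real.exp (-((η * u / (b * lam₂)) * Z ω)) ∂P) := by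
  set μ₁ := P.map X₁ with hμ₁
  set μ₂ := P.map X₂ with hμ₂
  set μZ := P.map Z with hμZ
  haveI : IsProbabilityMeasure μ₁ := Measure.isProbabilityMeasure_map hX₁m.aemeasurable
  haveI : IsProbabilityMeasure μ₂ := Measure.isProbabilityMeasure_map hX₂m.aemeasurable
  haveI : IsProbabilityMeasure μZ := Measure.isProbabilityMeasure_map hZmeas.aemeasurable
  set α := u * c / (b * lam₂) with hα
  set β := η * u / (b * lam₂) with hβ
  set K := u / (b * ρ * lam₂) with hK
  -- the joint law
  have hWm : Measurable (fun ω => (X₁ ω, Z ω)) := hX₁m.prodMk hZmeas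
  have hmapW : P.map (fun ω => (X₁ ω, Z ω)) = μ₁.prod μZ :=
    (indepFun_iff_map_prod_eq_prod_map_map hX₁m.aemeasurable hZmeas.aemeasurable).mp hI2
  have hmapV : P.map (fun ω => ((X₁ ω, Z ω), X₂ ω)) = (μ₁.prod μZ).prod μ₂ := by
    rw [(indepFun_iff_map_prod_eq_prod_map_map hWm.aemeasurable hX₂m.aemeasurable).mp hI1,
      hmapW]
  set M : Set ((ℝ × ℝ) × ℝ) :=
    {p | u * (c * ρ * p.1.1 + η * ρ * p.1.2 + 1) ≤ b * ρ * p.2} with hM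
  have hMmeas : MeasurableSet M := measurableSet_le (by fun_prop) (by fun_prop)
  have hset : {ω | u * (c * ρ * X₁ ω + η * ρ * Z ω + 1) ≤ b * ρ * X₂ ω}
      = (fun ω => ((X₁ ω, Z ω), X₂ ω)) ⁻¹' M := rfl
  rw [hset, ← Measure.map_apply (hWm.prodMk hX₂m) hMmeas, hmapV,
    Measure.prod_apply hMmeas]
  -- a.e. nonnegativity of coordinates
  have hμ₁neg : μ₁ (Iio 0) = 0 := by
    rw [hX₁, withDensity_apply _ measurableSet_Iio]
    refine (setLIntegral_congr_fun measurableSet_Iio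
      (fun x hx => ?_)).trans lintegral_zero
    rw [mem_Iio] at hx
    simp [expDens, not_le.2 hx]
  have hμZneg : μZ (Iio 0) = 0 := by
    rw [hμZ, Measure.map_apply hZmeas measurableSet_Iio]
    convert measure_empty (μ := P)
    ext ω
    simp [not_lt.2 (hZnonneg ω)]
  have hae : ∀ᵐ w ∂(μ₁.prod μZ), 0 ≤ w.1 ∧ 0 ≤ w.2 := by
    rw [ae_iff]
    refine measure_mono_null (t := (Iio 0 ×ˢ (univ : Set ℝ)) ∪ ((univ : Set ℝ) ×ˢ Iio 0))
      (fun w hw => ?_) (measure_union_null ?_ ?_)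
    · simp only [mem_setOf_eq, not_and_or, not_le] at hw
      rcases hw with h | h
      · exact Or.inl ⟨h, mem_univ _⟩
      · exact Or.inr ⟨mem_univ _, h⟩
    · rw [Measure.prod_prod, hμ₁neg, zero_mul]
    · rw [Measure.prod_prod, hμZneg, mul_zero]
  -- pointwise tail computation
  have hpt : ∀ᵐ w ∂(μ₁.prod μZ), μ₂ (Prod.mk w ⁻¹' M) =
      ENNReal.ofReal (Real.exp (-K)) *
        (ENNReal.ofReal (Real.exp (-(α * w.1))) * ENNReal.ofReal (Real.exp (-(β * w.2)))) := by
    filter_upwards [hae] with w hw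
    have hpre : Prod.mk w ⁻¹' M
        = Ici ((u * (c * ρ * w.1 + η * ρ * w.2 + 1)) / (b * ρ)) := by
      ext x
      simp only [hM, mem_preimage, mem_setOf_eq, mem_Ici]
      rw [div_le_iff₀ (by positivity)]
      constructor <;> intro h <;> linarith [h, mul_comm x (b * ρ)]
    have hsnn : 0 ≤ (u * (c * ρ * w.1 + η * ρ * w.2 + 1)) / (b * ρ) := by
      have h1 : 0 ≤ c * ρ * w.1 := mul_nonneg (by positivity) hw.1
      have h2 : 0 ≤ η * ρ * w.2 := mul_nonneg (by positivity) hw.2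
      apply div_nonneg _ (by positivity)
      apply mul_nonneg hu.le
      linarith
    rw [hpre, hX₂, expTail hlam₂ hsnn]
    rw [← ENNReal.ofReal_mul (by positivity), ← ENNReal.ofReal_mul (by positivity)]
    congr 1
    rw [← Real.exp_add, ← Real.exp_add]
    congr 1
    rw [hK, hα, hβ]
    field_simp
    ring
  rw [lintegral_congr_ae hpt, lintegral_const_mul _ (by fun_prop),
    lintegral_prod_mul (f := fun x => ENNReal.ofReal (Real.exp (-(α * x))))
      (g := fun x => ENNReal.ofReal (Real.exp (-(β * x)))) (by fun_prop) (by fun_prop)]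
  rw [hX₁, expMoment hlam₁ (by positivity)]
  have hμZint : ∫⁻ z, ENNReal.ofReal (Real.exp (-(β * z))) ∂μZ
      = ENNReal.ofReal (∫ ω, Real.exp (-(β * Z ω)) ∂P) := by
    have hint2 : Integrable (fun ω => Real.exp (-(β * Z ω))) P := by
      refine Integrable.mono' (integrable_const 1)
        (Measurable.aestronglyMeasurable (by fun_prop)) ?_
      filter_upwards with ω
      rw [Real.norm_eq_abs, abs_of_pos (Real.exp_pos _)]
      exact Real.exp_le_one_iff.mpr
        (neg_nonpos.2 (mul_nonneg (by positivity) (hZnonneg ω)))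
    rw [hμZ, lintegral_map (by fun_prop) hZmeas,
      ← ofReal_integral_eq_lintegral_ofReal hint2
        (Filter.Eventually.of_forall (fun ω => (Real.exp_pos _).le))]
  rw [hμZint,
    ← ENNReal.ofReal_mul (p := (1:ℝ) / (α * lam₁ + 1)) (by positivity),
    ← ENNReal.ofReal_mul (p := Real.exp (-K)) (Real.exp_pos _).le]
  congr 1
  have hD : 1 / (α * lam₁ + 1) = b * lam₂ / (u * c * lam₁ + b * lam₂) := by
    rw [hα, div_eq_div_iff (by positivity) (by positivity)]
    field_simp
  rw [hD]
  ring

/-- A real random variable `X` is exponentially distributed with mean `lam > 0` if its law has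
density `(1/lam) * exp (-x/lam)` on `[0, ∞)` and `0` on `(-∞, 0)`. -/
def HasExpLaw {Ω : Type*} [MeasurableSpace Ω] (P : Measure Ω) (X : Ω → ℝ) (lam : ℝ) : Prop :=
  Measurable X ∧
    P.map X = MeasureTheory.volume.withDensity
      (fun x => ENNReal.ofReal (if 0 ≤ x then (1 / lam) * Real.exp (-x / lam) else 0))


theorem stmt_5 {Ω : Type*} [MeasurableSpace Ω] (P : Measure Ω) [IsProbabilityMeasure P]
    (lam₁ lam₂ ρ η u a₁ : ℝ) (hlam₁ : 0 < lam₁) (hlam₂ : 0 < lam₂)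
    (hρ : 0 < ρ) (hη : 0 < η) (hu : 0 < u) (ha₁ : 0 < a₁) (ha₁' : a₁ ≤ 1)
    (X₁ X₂ Z ε : Ω → ℝ)
    (hX₁ : HasExpLaw P X₁ lam₁) (hX₂ : HasExpLaw P X₂ lam₂)
    (hZmeas : Measurable Z) (hZnonneg : ∀ ω, 0 ≤ Z ω)
    (hεmeas : Measurable ε)
    (hε0 : P {ω | ε ω = 0} = 1/2) (hε1 : P {ω | ε ω = 1} = 1/2)
    (hindep : iIndepFun ![X₁, X₂, Z, ε] P) :
    (P {ω | (1 - ε ω * (1 - a₁)) * ρ * X₂ ω <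
        u * ((1 - (1 - ε ω) * (1 - a₁)) * ρ * X₁ ω + η * ρ * Z ω + 1)}).toReal =
      1 - (1/2) *
        ((lam₂ / (a₁ * u * lam₁ + lam₂)) * Real.exp (-u / (lam₂ * ρ)) *
            (∫ ω, Real.exp (-(η * u * Z ω) / lam₂) ∂P) +
          (a₁ * lam₂ / (u * lam₁ + a₁ * lam₂)) * Real.exp (-u / (a₁ * lam₂ * ρ)) *
            (∫ ω, Real.exp (-(η * u * Z ω) / (a₁ * lam₂)) ∂P)) := by
  obtain ⟨hX₁m, hX₁law⟩ := hX₁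
  obtain ⟨hX₂m, hX₂law⟩ := hX₂
  have hmeas : ∀ i, Measurable (![X₁, X₂, Z, ε] i) := by
    intro i; fin_cases i <;> assumption
  -- independence facts
  have hI2 : IndepFun X₁ Z P := by
    simpa using hindep.indepFun (show (0 : Fin 4) ≠ 2 by decide)
  have hI1 : IndepFun (fun ω => (X₁ ω, Z ω)) X₂ P := by
    simpa using hindep.indepFun_prodMk hmeas 0 2 1 (by decide) (by decide)
  have h012 := hindep.indepFun_finset {0, 1, 2} {3} (by decide) hmeas
  have hTε : IndepFun (fun ω => (X₁ ω, X₂ ω, Z ω)) ε P := by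
    have := h012.comp
      (φ := fun v : (({0,1,2} : Finset (Fin 4)) → ℝ) =>
        (v ⟨0, by decide⟩, v ⟨1, by decide⟩, v ⟨2, by decide⟩))
      (ψ := fun v : (({3} : Finset (Fin 4)) → ℝ) => v ⟨3, by decide⟩)
      (by fun_prop)
      (show Measurable (fun v : (({3} : Finset (Fin 4)) → ℝ) => v ⟨3, by decide⟩) from
        measurable_pi_apply _)
    simpa [Function.comp_def] using this
  -- the two conditional events (in complement form)
  set F₁ : Set Ω := {ω | u * (a₁ * ρ * X₁ ω + η * ρ * Z ω + 1) ≤ 1 * ρ * X₂ ω} with hF₁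
  set F₂ : Set Ω := {ω | u * (1 * ρ * X₁ ω + η * ρ * Z ω + 1) ≤ a₁ * ρ * X₂ ω} with hF₂
  have hF₁meas : MeasurableSet F₁ := measurableSet_le (by fun_prop) (by fun_prop)
  have hF₂meas : MeasurableSet F₂ := measurableSet_le (by fun_prop) (by fun_prop)
  set E : Set Ω := {ω | (1 - ε ω * (1 - a₁)) * ρ * X₂ ω <
      u * ((1 - (1 - ε ω) * (1 - a₁)) * ρ * X₁ ω + η * ρ * Z ω + 1)} with hE
  have hEmeas : MeasurableSet E := measurableSet_lt (by fun_prop) (by fun_prop)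
  set S0 : Set Ω := {ω | ε ω = 0} with hS0
  set S1 : Set Ω := {ω | ε ω = 1} with hS1
  have hS0meas : MeasurableSet S0 := hεmeas (measurableSet_singleton 0)
  have hS1meas : MeasurableSet S1 := hεmeas (measurableSet_singleton 1)
  -- split on the value of ε
  have hsplit : P E = P (E ∩ S0) + P (E ∩ S1) := by
    have h1 : P (E ∩ (S0 ∪ S1)) + P (E \ (S0 ∪ S1)) = P E :=
      measure_inter_add_diff E (hS0meas.union hS1meas)
    have hdisj01 : Disjoint S0 S1 := by
      rw [Set.disjoint_left]
      intro ω h0 h1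
      rw [hS0, mem_setOf_eq] at h0; rw [hS1, mem_setOf_eq] at h1
      simp [h0] at h1
    have hfull : P (S0 ∪ S1) = 1 := by
      rw [measure_union hdisj01 hS1meas, hε0, hε1, ENNReal.div_add_div_same, one_add_one_eq_two,
        ENNReal.div_self (by norm_num) (by norm_num)]
    have hnull : P (E \ (S0 ∪ S1)) = 0 := by
      refine le_antisymm ?_ zero_le
      calc P (E \ (S0 ∪ S1)) ≤ P (S0 ∪ S1)ᶜ := measure_mono (fun ω h => h.2)
        _ = 0 := by
          rw [measure_compl (hS0meas.union hS1meas) (measure_ne_top _ _), measure_univ,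
            hfull, tsub_self]
    rw [← h1, hnull, add_zero, inter_union_distrib_left,
      measure_union (hdisj01.mono inter_subset_right inter_subset_right)
        (hEmeas.inter hS1meas)]
  -- rewrite the two pieces
  have hE0 : E ∩ S0 = F₁ᶜ ∩ S0 := by
    ext ω
    simp only [hE, hF₁, hS0, mem_inter_iff, mem_compl_iff, mem_setOf_eq, not_le]
    constructor
    · rintro ⟨h1, h2⟩
      rw [h2] at h1
      exact ⟨by linarith, h2⟩
    · rintro ⟨h1, h2⟩
      refine ⟨?_, h2⟩
      rw [h2]
      linarith
  have hE1 : E ∩ S1 = F₂ᶜ ∩ S1 := by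
    ext ω
    simp only [hE, hF₂, hS1, mem_inter_iff, mem_compl_iff, mem_setOf_eq, not_le]
    constructor
    · rintro ⟨h1, h2⟩
      rw [h2] at h1
      exact ⟨by linarith, h2⟩
    · rintro ⟨h1, h2⟩
      refine ⟨?_, h2⟩
      rw [h2]
      linarith
  -- independence: split off the ε factor
  have hpre0 : ε ⁻¹' {(0:ℝ)} = S0 := by ext ω; simp [hS0]
  have hpre1 : ε ⁻¹' {(1:ℝ)} = S1 := by ext ω; simp [hS1]
  have hmul1 : P (F₁ᶜ ∩ S0) = P F₁ᶜ * (1/2) := by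
    have hN : MeasurableSet {p : ℝ × ℝ × ℝ |
        u * (a₁ * ρ * p.1 + η * ρ * p.2.2 + 1) ≤ 1 * ρ * p.2.1} :=
      measurableSet_le (by fun_prop) (by fun_prop)
    have h := hTε.measure_inter_preimage_eq_mul _ _ hN.compl (measurableSet_singleton (0:ℝ))
    have e1 : (fun ω => (X₁ ω, X₂ ω, Z ω)) ⁻¹' {p : ℝ × ℝ × ℝ |
        u * (a₁ * ρ * p.1 + η * ρ * p.2.2 + 1) ≤ 1 * ρ * p.2.1}ᶜ = F₁ᶜ := rfl
    rw [e1, hpre0, hε0] at h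
    exact h
  have hmul2 : P (F₂ᶜ ∩ S1) = P F₂ᶜ * (1/2) := by
    have hN : MeasurableSet {p : ℝ × ℝ × ℝ |
        u * (1 * ρ * p.1 + η * ρ * p.2.2 + 1) ≤ a₁ * ρ * p.2.1} :=
      measurableSet_le (by fun_prop) (by fun_prop)
    have h := hTε.measure_inter_preimage_eq_mul _ _ hN.compl (measurableSet_singleton (1:ℝ))
    have e1 : (fun ω => (X₁ ω, X₂ ω, Z ω)) ⁻¹' {p : ℝ × ℝ × ℝ |
        u * (1 * ρ * p.1 + η * ρ * p.2.2 + 1) ≤ a₁ * ρ * p.2.1}ᶜ = F₂ᶜ := rfl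
    rw [e1, hpre1, hε1] at h
    exact h
  -- compute the two probabilities via probG
  set r₁ : ℝ := (1 * lam₂ / (u * a₁ * lam₁ + 1 * lam₂)) * Real.exp (-(u / (1 * ρ * lam₂))) *
      ∫ ω, Real.exp (-((η * u / (1 * lam₂)) * Z ω)) ∂P with hr₁
  set r₂ : ℝ := (a₁ * lam₂ / (u * 1 * lam₁ + a₁ * lam₂)) * Real.exp (-(u / (a₁ * ρ * lam₂))) *
      ∫ ω, Real.exp (-((η * u / (a₁ * lam₂)) * Z ω)) ∂P with hr₂
  have hPF₁ : P F₁ = ENNReal.ofReal r₁ :=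
    probG P hlam₁ hlam₂ hρ hη hu one_pos ha₁ X₁ X₂ Z hX₁m hX₂m hX₁law hX₂law
      hZmeas hZnonneg hI1 hI2
  have hPF₂ : P F₂ = ENNReal.ofReal r₂ :=
    probG P hlam₁ hlam₂ hρ hη hu ha₁ one_pos X₁ X₂ Z hX₁m hX₂m hX₁law hX₂law
      hZmeas hZnonneg hI1 hI2
  -- bounds on r₁, r₂
  have hZint : ∀ γ : ℝ, 0 ≤ γ → Integrable (fun ω => Real.exp (-(γ * Z ω))) P := by
    intro γ hγ
    refine Integrable.mono' (integrable_const 1)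
      (Measurable.aestronglyMeasurable (by fun_prop)) ?_
    filter_upwards with ω
    rw [Real.norm_eq_abs, abs_of_pos (Real.exp_pos _)]
    exact Real.exp_le_one_iff.mpr (neg_nonpos.2 (mul_nonneg hγ (hZnonneg ω)))
  have hIbound : ∀ γ : ℝ, 0 ≤ γ →
      (0 ≤ ∫ ω, Real.exp (-(γ * Z ω)) ∂P) ∧ (∫ ω, Real.exp (-(γ * Z ω)) ∂P) ≤ 1 := by
    intro γ hγ
    refine ⟨integral_nonneg (fun ω => (Real.exp_pos _).le), ?_⟩
    calc (∫ ω, Real.exp (-(γ * Z ω)) ∂P) ≤ ∫ _, (1:ℝ) ∂P := by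
          refine integral_mono (hZint γ hγ) (integrable_const 1) (fun ω => ?_)
          exact Real.exp_le_one_iff.mpr (neg_nonpos.2 (mul_nonneg hγ (hZnonneg ω)))
      _ = 1 := by simp
  have hrbound : ∀ b c : ℝ, 0 < b → 0 < c →
      (0 ≤ (b * lam₂ / (u * c * lam₁ + b * lam₂)) * Real.exp (-(u / (b * ρ * lam₂))) *
        ∫ ω, Real.exp (-((η * u / (b * lam₂)) * Z ω)) ∂P) ∧
      ((b * lam₂ / (u * c * lam₁ + b * lam₂)) * Real.exp (-(u / (b * ρ * lam₂))) *
        ∫ ω, Real.exp (-((η * u / (b * lam₂)) * Z ω)) ∂P) ≤ 1 := by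
    intro b c hb hc
    have hγ : (0:ℝ) ≤ η * u / (b * lam₂) := by positivity
    obtain ⟨hI0, hI1'⟩ := hIbound _ hγ
    have hD0 : (0:ℝ) ≤ b * lam₂ / (u * c * lam₁ + b * lam₂) := by positivity
    have hD1 : b * lam₂ / (u * c * lam₁ + b * lam₂) ≤ 1 := by
      rw [div_le_one (by positivity)]
      nlinarith [mul_pos (mul_pos hu hc) hlam₁]
    have hE1' : Real.exp (-(u / (b * ρ * lam₂))) ≤ 1 :=
      Real.exp_le_one_iff.mpr (neg_nonpos.2 (by positivity))
    constructor
    · exact mul_nonneg (mul_nonneg hD0 (Real.exp_pos _).le) hI0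
    · exact mul_le_one₀ (mul_le_one₀ hD1 (Real.exp_pos _).le hE1') hI0 hI1'
  obtain ⟨hr₁0, hr₁1⟩ := hrbound 1 a₁ one_pos ha₁
  obtain ⟨hr₂0, hr₂1⟩ := hrbound a₁ 1 ha₁ one_pos
  rw [← hr₁] at hr₁0 hr₁1
  rw [← hr₂] at hr₂0 hr₂1
  -- assemble
  have hc1 : P F₁ᶜ = ENNReal.ofReal (1 - r₁) := by
    rw [measure_compl hF₁meas (measure_ne_top _ _), measure_univ, hPF₁,
      ENNReal.ofReal_sub _ hr₁0, ENNReal.ofReal_one]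
  have hc2 : P F₂ᶜ = ENNReal.ofReal (1 - r₂) := by
    rw [measure_compl hF₂meas (measure_ne_top _ _), measure_univ, hPF₂,
      ENNReal.ofReal_sub _ hr₂0, ENNReal.ofReal_one]
  rw [hsplit, hE0, hE1, hmul1, hmul2, hc1, hc2]
  rw [ENNReal.toReal_add (ENNReal.mul_ne_top ENNReal.ofReal_ne_top (by simp))
      (ENNReal.mul_ne_top ENNReal.ofReal_ne_top (by simp)),
    ENNReal.toReal_mul, ENNReal.toReal_mul,
    ENNReal.toReal_ofReal (by linarith), ENNReal.toReal_ofReal (by linarith)]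
  have htr : ((1:ENNReal)/2).toReal = 1/2 := by simp
  rw [htr]
  have key1 : ∀ t : ℝ, -(η * u * t) / lam₂ = -((η * u / (1 * lam₂)) * t) :=
    fun t => by ring
  have key2 : ∀ t : ℝ, -(η * u * t) / (a₁ * lam₂) = -((η * u / (a₁ * lam₂)) * t) :=
    fun t => by ring
  simp only [key1, key2]
  rw [show -u / (lam₂ * ρ) = -(u / (1 * ρ * lam₂)) by ring,
    show -u / (a₁ * lam₂ * ρ) = -(u / (a₁ * ρ * lam₂)) by ring, hr₁, hr₂]
  ring
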